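/- No quadratic invariant in even dimension: for every m ≥ 1 put n = 2m. If B' is a symmetric bilinear form on ℝⁿ such that B'(Ax, y) + B'(x, Ay) = 0 for all x, y ∈ ℝⁿ and all A ∈ {E₊, E₋, E₀}, then B' = 0. -/

import Mathlib

/-- `E₊` of the `n`-dimensional irreducible representation of `sl(2,ℝ)`:
`(E₊)_{i,i+1} = n−1−i`, other entries zero. -/
noncomputable def EplusN (n : ℕ) : Matrix (Fin n) (Fin n) ℝ :=
  Matrix.of fun i j => if (i : ℕ) + 1 = (j : ℕ) then (n : ℝ) - 1 - (i : ℕ) else 0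

/-- `E₋`: `(E₋)_{i+1,i} = i+1`, other entries zero. -/
noncomputable def EminusN (n : ℕ) : Matrix (Fin n) (Fin n) ℝ :=
  Matrix.of fun i j => if (i : ℕ) = (j : ℕ) + 1 then ((i : ℕ) : ℝ) else 0

/-- `E₀ = diag(2i − (n−1))`. -/
noncomputable def EzeroN (n : ℕ) : Matrix (Fin n) (Fin n) ℝ :=
  Matrix.of fun i j => if i = j then 2 * ((i : ℕ) : ℝ) - ((n : ℝ) - 1) else 0

open Matrix

/-- Expansion of a linear map on `Fin n → ℝ` over the standard basis. -/
private lemma expandB {n : ℕ} {M : Type*} [AddCommMonoid M] [Module ℝ M]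
    (B : (Fin n → ℝ) →ₗ[ℝ] M) (v : Fin n → ℝ) :
    B v = ∑ k, v k • B (Pi.single k 1) := by
  conv_lhs => rw [← Finset.univ_sum_single v]
  rw [map_sum]
  refine Finset.sum_congr rfl fun k _ => ?_
  rw [← _root_.map_smul]
  congr 1
  rw [← Pi.single_smul, smul_eq_mul, mul_one]

private lemma sumPlus {n : ℕ} (f : Fin n → ℝ) (i : Fin n) (hi : 1 ≤ (i : ℕ)) :
    (∑ k, EplusN n k i * f k) = ((n : ℝ) - (i : ℕ)) * f ⟨(i : ℕ) - 1, by omega⟩ := by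
  rw [Finset.sum_eq_single (⟨(i : ℕ) - 1, by omega⟩ : Fin n)]
  · simp only [EplusN, Matrix.of_apply, Fin.val_mk]
    rw [if_pos (by omega)]
    congr 1
    rw [Nat.cast_sub hi]
    ring
  · intro k _ hk
    simp only [EplusN, Matrix.of_apply]
    rw [if_neg, zero_mul]
    intro h
    exact hk (Fin.ext (by simp only [Fin.val_mk]; omega))
  · simp

private lemma sumZero {n : ℕ} (f : Fin n → ℝ) (i : Fin n) :
    (∑ k, EzeroN n k i * f k) = (2 * ((i : ℕ) : ℝ) - ((n : ℝ) - 1)) * f i := by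
  rw [Finset.sum_eq_single i]
  · simp [EzeroN]
  · intro k _ hk
    simp [EzeroN, hk]
  · simp

/-- No quadratic invariant in even dimension `n = 2m`: any symmetric bilinear form
invariant under the irreducible `sl(2,ℝ)` vanishes. -/
theorem stmt18 (m : ℕ) (hm : 1 ≤ m)
    (B' : (Fin (2 * m) → ℝ) →ₗ[ℝ] (Fin (2 * m) → ℝ) →ₗ[ℝ] ℝ)
    (hsymm : ∀ x y : Fin (2 * m) → ℝ, B' x y = B' y x)
    (hinv : ∀ A ∈ ({EplusN (2 * m), EminusN (2 * m), EzeroN (2 * m)} :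
          Set (Matrix (Fin (2 * m)) (Fin (2 * m)) ℝ)),
      ∀ x y : Fin (2 * m) → ℝ, B' (A.mulVec x) y + B' x (A.mulVec y) = 0) :
    ∀ x y : Fin (2 * m) → ℝ, B' x y = 0 := by
  set b : Fin (2 * m) → Fin (2 * m) → ℝ :=
    fun i j => B' (Pi.single i 1) (Pi.single j 1) with hbdef
  -- general invariance relation on basis vectors
  have key : ∀ A ∈ ({EplusN (2 * m), EminusN (2 * m), EzeroN (2 * m)} :
      Set (Matrix (Fin (2 * m)) (Fin (2 * m)) ℝ)), ∀ i j : Fin (2 * m),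
      (∑ k, A k i * b k j) + (∑ k, A k j * b i k) = 0 := by
    intro A hA i j
    have h := hinv A hA (Pi.single i 1) (Pi.single j 1)
    rw [show A *ᵥ Pi.single i 1 = fun k => A k i * 1 from by ext k; simp,
      show A *ᵥ Pi.single j 1 = fun k => A k j * 1 from by ext k; simp] at h
    rw [expandB B' (fun k => A k i * 1),
        expandB (B' (Pi.single i 1)) (fun k => A k j * 1)] at h
    simpa [hbdef, smul_eq_mul] using h
  have hplus := key (EplusN (2 * m)) (by simp)
  have hzero := key (EzeroN (2 * m)) (by simp)
  -- off-antidiagonal entries vanish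
  have hoff : ∀ i j : Fin (2 * m), (i : ℕ) + (j : ℕ) ≠ 2 * m - 1 → b i j = 0 := by
    intro i j hij
    have h := hzero i j
    rw [sumZero (fun k => b k j) i, sumZero (fun k => b i k) j] at h
    have h2 : ((2 * ((i : ℕ) : ℝ) - (((2 * m : ℕ) : ℝ) - 1)) +
        (2 * ((j : ℕ) : ℝ) - (((2 * m : ℕ) : ℝ) - 1))) * b i j = 0 := by
      rw [add_mul]; exact h
    rcases mul_eq_zero.mp h2 with h3 | h3
    · exfalso
      have hne : (((i : ℕ) + (j : ℕ) : ℕ) : ℝ) ≠ (((2 * m - 1 : ℕ)) : ℝ) := by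
        exact_mod_cast hij
      have h1 : ((2 * m - 1 : ℕ) : ℝ) = 2 * (m : ℝ) - 1 := by
        have h1m : 1 ≤ 2 * m := by omega
        push_cast [h1m]
        ring
      rw [h1] at hne
      push_cast at hne h3
      apply hne
      linarith
    · exact h3
  -- antidiagonal entries
  set c : ℕ → ℝ := fun k =>
    if h : k < 2 * m then b ⟨k, h⟩ ⟨2 * m - 1 - k, by omega⟩ else 0 with hcdef
  have hc : ∀ (k : ℕ) (h : k < 2 * m),
      c k = b ⟨k, h⟩ ⟨2 * m - 1 - k, by omega⟩ := by
    intro k h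
    rw [hcdef]
    exact dif_pos h
  have hc0 : ∀ (k : ℕ), ¬ k < 2 * m → c k = 0 := by
    intro k h
    rw [hcdef]
    exact dif_neg h
  -- symmetry of antidiagonal entries
  have hsymc : ∀ k, k < 2 * m → c k = c (2 * m - 1 - k) := by
    intro k hk
    rw [hc k hk, hc (2 * m - 1 - k) (by omega), hbdef]
    have : (⟨2 * m - 1 - (2 * m - 1 - k), by omega⟩ : Fin (2 * m)) = ⟨k, hk⟩ :=
      Fin.ext (by simp only [Fin.val_mk]; omega)
    rw [this]
    exact hsymm _ _
  -- recurrence from E₊ invariance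
  have hrec : ∀ k : ℕ, 1 ≤ k → k ≤ 2 * m - 1 →
      (((2 * m : ℕ) : ℝ) - (k : ℝ)) * c (k - 1) + (k : ℝ) * c k = 0 := by
    intro k hk1 hk2
    have hklt : k < 2 * m := by omega
    have h := hplus ⟨k, hklt⟩ ⟨2 * m - k, by omega⟩
    rw [sumPlus (fun x => b x ⟨2 * m - k, by omega⟩) ⟨k, hklt⟩ hk1,
        sumPlus (fun x => b ⟨k, hklt⟩ x) ⟨2 * m - k, by omega⟩ (by
          simp only [Fin.val_mk]; omega)] at h
    simp only [Fin.val_mk] at h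
    have e1 : b ⟨k - 1, by omega⟩ ⟨2 * m - k, by omega⟩ = c (k - 1) := by
      rw [hc (k - 1) (by omega)]
      congr 1
      exact Fin.ext (by simp only [Fin.val_mk]; omega)
    have e2 : b ⟨k, hklt⟩ ⟨2 * m - k - 1, by omega⟩ = c k := by
      rw [hc k hklt]
      congr 1
      exact Fin.ext (by simp only [Fin.val_mk]; omega)
    rw [e1, e2, Nat.cast_sub hklt.le] at h
    linear_combination h
  -- middle antidiagonal entries vanish (uses evenness of the dimension)
  have hmm : c (m - 1) = c m := by
    have h := hsymc (m - 1) (by omega)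
    rwa [show 2 * m - 1 - (m - 1) = m by omega] at h
  have hmid : c m = 0 := by
    have h := hrec m (by omega) (by omega)
    rw [hmm] at h
    have hcoef : (((2 * m : ℕ) : ℝ) - (m : ℝ)) + (m : ℝ) ≠ 0 := by
      push_cast
      have : (1 : ℝ) ≤ (m : ℝ) := by exact_mod_cast hm
      nlinarith
    have h2 : ((((2 * m : ℕ) : ℝ) - (m : ℝ)) + (m : ℝ)) * c m = 0 := by
      rw [add_mul]; exact h
    rcases mul_eq_zero.mp h2 with h3 | h3
    · exact absurd h3 hcoef
    · exact h3
  have hmid' : c (m - 1) = 0 := hmm.trans hmid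
  -- propagate upwards
  have hup : ∀ k : ℕ, c (m + k) = 0 := by
    intro k
    induction k with
    | zero => simpa using hmid
    | succ k ih =>
      by_cases hk : m + k + 1 ≤ 2 * m - 1
      · have h := hrec (m + k + 1) (by omega) hk
        rw [show m + k + 1 - 1 = m + k by omega, ih, mul_zero, zero_add] at h
        rcases mul_eq_zero.mp h with h3 | h3
        · exfalso
          have : ((m + k + 1 : ℕ) : ℝ) = 0 := by push_cast; push_cast at h3; linarith
          have := Nat.cast_eq_zero.mp this
          omega
        · exact h3
      · exact hc0 _ (by omega)
  -- propagate downwards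
  have hdown : ∀ k : ℕ, k ≤ m - 1 → c (m - 1 - k) = 0 := by
    intro k
    induction k with
    | zero => intro _; simpa using hmid'
    | succ k ih =>
      intro hk
      have h := hrec (m - 1 - k) (by omega) (by omega)
      rw [ih (by omega), mul_zero, add_zero] at h
      rcases mul_eq_zero.mp h with h3 | h3
      · exfalso
        have hlt : ((m - 1 - k : ℕ) : ℝ) < ((2 * m : ℕ) : ℝ) :=
          Nat.cast_lt.mpr (by omega)
        linarith
      · rwa [show m - 1 - k - 1 = m - 1 - (k + 1) by omega] at h3
  have hcall : ∀ k : ℕ, c k = 0 := by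
    intro k
    by_cases hk : k < 2 * m
    · by_cases hkm : m ≤ k
      · have h := hup (k - m)
        rwa [show m + (k - m) = k by omega] at h
      · have h := hdown (m - 1 - k) (by omega)
        rwa [show m - 1 - (m - 1 - k) = k by omega] at h
    · exact hc0 k hk
  -- all basis values vanish
  have hbij : ∀ i j : Fin (2 * m), b i j = 0 := by
    intro i j
    by_cases hij : (i : ℕ) + (j : ℕ) = 2 * m - 1
    · have h := hcall (i : ℕ)
      rw [hc (i : ℕ) i.isLt] at h
      have hj : j = (⟨2 * m - 1 - (i : ℕ), by omega⟩ : Fin (2 * m)) :=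
        Fin.ext (by simp only [Fin.val_mk]; omega)
      rw [hj]
      exact h
    · exact hoff i j hij
  -- conclude
  intro x y
  rw [expandB B' x]
  simp only [LinearMap.sum_apply, LinearMap.smul_apply]
  refine Finset.sum_eq_zero fun i _ => ?_
  rw [expandB (B' (Pi.single i 1)) y]
  rw [Finset.sum_eq_zero fun j _ => smul_eq_zero_of_right (y j) (hbij i j)]
  exact smul_zero _
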